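/- Let (X,μ) be a probability space and T: X → X an invertible ergodic measure-preserving transformation, with X covered by a collection W^s of pairwise disjoint measurable local stable leaves satisfying T(W^s(x)) ⊆ W^s(Tx). Let Y ⊆ X be a positive measure subset that is a union of leaves of W^s, with first return time R(y) = inf{n ≥ 1 : T^n y ∈ Y} and first return map F(y) = T^{R(y)}y, and for x ∈ X and n ≥ 1 set h_n(x) = #{0 ≤ j ≤ n : T^j x ∈ Y}. Let φ: X → ℝ be measurable, β > 1, and suppose μ(y ∈ Y : R(y) > n) = O(n^{−(β+1)}) and there exist constants C ≥ 1 and γ ∈ (0,1) such that diam(φ(T^n W)) ≤ C γ^{h_n(x)} for all W ∈ W^s, x ∈ W, and n ≥ 1. Then ∫_X diam(φ(T^n W^s(x))) dμ(x) = O(n^{−β}) as n → ∞. -/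

import Mathlib

open MeasureTheory Filter
open scoped ENNReal Topology
open Finset

-- single step telescoping inequality
lemma step_ineq {β : ℝ} (hβ : 1 ≤ β) {a : ℝ} (ha : 1 ≤ a) :
    a ^ (-(β+1)) ≤ (1+β)/β * (a ^ (-β) - (a+1) ^ (-β)) := by
  have ha0 : (0:ℝ) < a := lt_of_lt_of_le one_pos ha
  have hβ0 : (0:ℝ) < β := lt_of_lt_of_le one_pos hβ
  have hb : 1 + β/a ≤ (1 + 1/a) ^ β := by
    have h := one_add_mul_self_le_rpow_one_add (s := 1/a)
      (le_trans (by norm_num : (-1:ℝ) ≤ 0) (by positivity)) hβ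
    calc 1 + β/a = 1 + β * (1/a) := by rw [mul_one_div]
    _ ≤ _ := h
  have h1a : (0:ℝ) < 1 + 1/a := by positivity
  have hba : (0:ℝ) < 1 + β/a := by positivity
  have h2 : (a+1) ^ (-β) ≤ a ^ (-β) / (1 + β/a) := by
    have hfac : a + 1 = a * (1 + 1/a) := by field_simp
    rw [hfac, Real.mul_rpow ha0.le h1a.le,
      show a^(-β)/(1+β/a) = a^(-β) * (1+β/a)⁻¹ from div_eq_mul_inv _ _]
    apply mul_le_mul_of_nonneg_left _ (Real.rpow_nonneg ha0.le _)
    rw [Real.rpow_neg h1a.le]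
    exact inv_anti₀ hba hb
  have h3 : a ^ (-β) - (a+1) ^ (-β) ≥ a ^ (-β) * (β/a) / (1 + β/a) := by
    have : a ^ (-β) - a ^ (-β) / (1 + β/a) = a ^ (-β) * (β/a) / (1 + β/a) := by
      field_simp; ring
    linarith [h2, this.symm.le]
  have h4 : a ^ (-β) * (β/a) = β * a ^ (-(β+1)) := by
    rw [show -(β+1) = -β + (-1) by ring, Real.rpow_add ha0, Real.rpow_neg_one]
    field_simp
  have h5 : (1 : ℝ) + β/a ≤ 1 + β := by
    have : β/a ≤ β := by
      rw [div_le_iff₀ ha0]; nlinarith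
    linarith
  have h6 : a ^ (-β) * (β/a) / (1 + β/a) ≥ β * a ^ (-(β+1)) / (1+β) := by
    rw [h4]
    exact div_le_div_of_nonneg_left (by positivity) hba h5
  have h7 : β * a ^ (-(β+1)) / (1+β) ≤ a ^ (-β) - (a+1) ^ (-β) := le_trans h6 h3
  rw [div_le_iff₀ (by positivity : (0:ℝ) < 1+β)] at h7
  rw [div_mul_eq_mul_div, le_div_iff₀ hβ0]
  nlinarith [h7]

lemma tail_partial {β : ℝ} (hβ : 1 ≤ β) {m : ℕ} (hm : 1 ≤ m) (N : ℕ) :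
    ∑ i ∈ range N, ((m + i : ℕ) : ℝ) ^ (-(β+1)) ≤ (1+β)/β * (m:ℝ) ^ (-β) := by
  have hβ0 : (0:ℝ) < β := lt_of_lt_of_le one_pos hβ
  set f : ℕ → ℝ := fun i => ((m + i : ℕ) : ℝ) ^ (-β) with hf
  have key : ∀ i, ((m + i : ℕ) : ℝ) ^ (-(β+1)) ≤ (1+β)/β * (f i - f (i+1)) := by
    intro i
    have ha : (1:ℝ) ≤ ((m + i : ℕ) : ℝ) := by
      have : 1 ≤ m + i := le_trans hm (Nat.le_add_right _ _)
      exact_mod_cast this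
    have := step_ineq hβ ha
    have hcast : ((m + (i+1) : ℕ) : ℝ) = ((m + i : ℕ) : ℝ) + 1 := by push_cast; ring
    have hgoal : ((m + (i+1) : ℕ) : ℝ) ^ (-β) = (((m + i : ℕ) : ℝ) + 1) ^ (-β) := by rw [hcast]
    simp only [hf]
    rw [hgoal]
    exact this
  calc ∑ i ∈ range N, ((m + i : ℕ) : ℝ) ^ (-(β+1))
      ≤ ∑ i ∈ range N, (1+β)/β * (f i - f (i+1)) := Finset.sum_le_sum fun i _ => key i
    _ = (1+β)/β * (f 0 - f N) := by rw [← Finset.mul_sum, Finset.sum_range_sub' f]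
    _ ≤ (1+β)/β * f 0 := by
        have : 0 ≤ f N := Real.rpow_nonneg (by positivity) _
        have h1 : (0:ℝ) ≤ (1+β)/β := by positivity
        nlinarith
    _ = (1+β)/β * (m:ℝ) ^ (-β) := by simp [hf]

lemma tail_summable {β : ℝ} (hβ : 1 ≤ β) {m : ℕ} (hm : 1 ≤ m) :
    Summable fun i : ℕ => ((m + i : ℕ) : ℝ) ^ (-(β+1)) :=
  summable_of_sum_range_le (fun i => Real.rpow_nonneg (by positivity) _)
    (tail_partial hβ hm)

lemma tail_tsum {β : ℝ} (hβ : 1 ≤ β) {m : ℕ} (hm : 1 ≤ m) :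
    ∑' i : ℕ, ((m + i : ℕ) : ℝ) ^ (-(β+1)) ≤ (1+β)/β * (m:ℝ) ^ (-β) :=
  Summable.tsum_le_of_sum_range_le (tail_summable hβ hm) (tail_partial hβ hm)

lemma pow_geom_tsum {γ : ℝ} (hγ0 : 0 < γ) (hγ1 : γ < 1) (p : ℕ) :
    ∃ Tt : ℝ, 0 < Tt ∧ Summable (fun k : ℕ => ((k:ℝ)+1) ^ p * γ ^ k) ∧
      ∀ N, ∑ k ∈ range N, ((k:ℝ)+1) ^ p * γ ^ k ≤ Tt := by
  have hsum : Summable (fun n : ℕ => (n:ℝ) ^ p * γ ^ n) := by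
    apply summable_pow_mul_geometric_of_norm_lt_one
    rw [Real.norm_eq_abs, abs_of_pos hγ0]; exact hγ1
  have hsum1 : Summable (fun k : ℕ => ((k+1 : ℕ):ℝ) ^ p * γ ^ (k+1)) :=
    (summable_nat_add_iff 1).mpr hsum
  have hsum2 : Summable (fun k : ℕ => ((k:ℝ)+1) ^ p * γ ^ k) := by
    have := hsum1.div_const γ
    apply this.congr
    intro k
    push_cast
    field_simp
    ring
  refine ⟨∑' k : ℕ, ((k:ℝ)+1) ^ p * γ ^ k, ?_, hsum2, ?_⟩
  · have h0 : (0:ℝ) < (((0:ℕ):ℝ)+1) ^ p * γ ^ 0 := by norm_num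
    refine lt_of_lt_of_le h0 (Summable.le_tsum hsum2 0 fun j _ => by positivity)
  · intro N
    apply Summable.sum_le_tsum _ (fun k _ => by positivity) hsum2

/-- Bound on the measure of the set of points not visiting `Y` during times `0,…,L`. -/
lemma Dset_bound {X : Type*} [mX : MeasurableSpace X]
    (μ : Measure X) [IsProbabilityMeasure μ]
    (T : X ≃ᵐ X) (hT : MeasurePreserving (⇑T) μ μ) (hTerg : Ergodic (⇑T) μ)
    (Y : Set X) (hYmeas : MeasurableSet Y) (hYpos : 0 < μ Y)
    (R : X → ℕ) (hR : ∀ y, R y = sInf {n : ℕ | 1 ≤ n ∧ (⇑T)^[n] y ∈ Y})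
    (β : ℝ) (hβ : 1 < β)
    (c1 : ℝ) (hc1 : 1 ≤ c1)
    (htail : ∀ n : ℕ, 1 ≤ n →
      μ {y ∈ Y | n < R y} ≤ ENNReal.ofReal (c1 * (n : ℝ) ^ (-(β + 1)))) :
    ∀ L : ℕ, μ {x | ∀ j ≤ L, (⇑T)^[j] x ∉ Y} ≤
      ENNReal.ofReal (c1 * ((1+β)/β) * ((L:ℝ)+1) ^ (-β)) := by
  intro L
  set D : ℕ → Set X := fun L => {x | ∀ j ≤ L, (⇑T)^[j] x ∉ Y} with hD
  have hDmeas : ∀ L, MeasurableSet (D L) := by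
    intro L
    have : D L = ⋂ j ∈ Set.Iic L, ((⇑T)^[j]) ⁻¹' Yᶜ := by
      ext x; simp [hD, Set.mem_iInter]
    rw [this]
    exact MeasurableSet.biInter (Set.to_countable _)
      (fun j _ => (hYmeas.compl.preimage (T.measurable.iterate j)))
  set A : Set X := {x | ∀ j, (⇑T)^[j] x ∉ Y} with hA
  have hAmeas : MeasurableSet A := by
    have : A = ⋂ j, ((⇑T)^[j]) ⁻¹' Yᶜ := by ext x; simp [hA]
    rw [this]
    exact MeasurableSet.iInter fun j => hYmeas.compl.preimage (T.measurable.iterate j)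
  -- A has measure zero
  have hA0 : μ A = 0 := by
    have hsub : A ⊆ ⇑T ⁻¹' A := by
      intro x hx j
      rw [Set.mem_setOf_eq] at hx
      have : (⇑T)^[j] (T x) = (⇑T)^[j+1] x := by
        rw [Function.iterate_succ_apply]
      show (⇑T)^[j] (T x) ∉ Y
      rw [this]; exact hx (j+1)
    rcases hTerg.ae_empty_or_univ_of_ae_le_preimage' hAmeas.nullMeasurableSet
        (HasSubset.Subset.eventuallyLE hsub) (measure_ne_top μ A) with hemp | huniv
    · rw [measure_congr hemp]; simp
    · exfalso
      have h1 : μ A = 1 := by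
        rw [measure_congr huniv, measure_univ]
      have hdis : Disjoint A Y := by
        rw [Set.disjoint_left]
        intro x hx hxY
        exact hx 0 (by simpa using hxY)
      have hle : μ A + μ Y ≤ 1 := by
        calc μ A + μ Y = μ (A ∪ Y) := (measure_union hdis hYmeas).symm
        _ ≤ μ Set.univ := measure_mono (Set.subset_univ _)
        _ = 1 := measure_univ
      rw [h1] at hle
      have : μ Y ≤ 0 := by
        have h2 : (1:ℝ≥0∞) + μ Y ≤ 1 + 0 := by simpa using hle
        exact (ENNReal.add_le_add_iff_left ENNReal.one_ne_top).mp h2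
      exact absurd (le_antisymm this zero_le) (ne_of_gt hYpos)
  -- one telescoping step
  have hTA : μ (⇑T ⁻¹' A) = 0 := by
    rw [hT.measure_preimage hAmeas.nullMeasurableSet, hA0]
  have hstep : ∀ M : ℕ, μ (D M) ≤ μ (D (M+1)) +
      ENNReal.ofReal (c1 * (((M+1 : ℕ)) : ℝ) ^ (-(β+1))) := by
    intro M
    have hpre : ⇑T ⁻¹' (D M) = D (M+1) ∪ (Y ∩ ⇑T ⁻¹' (D M)) := by
      ext x
      simp only [Set.mem_preimage, Set.mem_union, Set.mem_inter_iff, hD, Set.mem_setOf_eq]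
      constructor
      · intro hx
        by_cases hxY : x ∈ Y
        · right; exact ⟨hxY, hx⟩
        · left; intro j hj
          rcases Nat.eq_zero_or_pos j with rfl | hj0
          · simpa using hxY
          · obtain ⟨i, rfl⟩ := Nat.exists_eq_succ_of_ne_zero (Nat.pos_iff_ne_zero.mp hj0)
            rw [Function.iterate_succ_apply]
            exact hx i (by omega)
      · rintro (hx | ⟨hxY, hx⟩)
        · intro j hj
          have h2 := hx (j+1) (by omega)
          rwa [Function.iterate_succ_apply] at h2
        · exact hx
    have hGmeas : MeasurableSet (Y ∩ ⇑T ⁻¹' (D M)) :=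
      hYmeas.inter ((hDmeas M).preimage T.measurable)
    have hdisj2 : Disjoint (D (M+1)) (Y ∩ ⇑T ⁻¹' (D M)) := by
      rw [Set.disjoint_left]
      intro x hx hx2
      exact (hx 0 (by omega)) (by simpa using hx2.1)
    have heq : μ (D M) = μ (D (M+1)) + μ (Y ∩ ⇑T ⁻¹' (D M)) := by
      have h1 : μ (⇑T ⁻¹' (D M)) = μ (D (M+1)) + μ (Y ∩ ⇑T ⁻¹' (D M)) := by
        conv_lhs => rw [hpre]
        exact measure_union hdisj2 hGmeas
      rw [← hT.measure_preimage (hDmeas M).nullMeasurableSet]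
      exact h1
    have hGsub : Y ∩ ⇑T ⁻¹' (D M) ⊆ {y ∈ Y | M+1 < R y} ∪ ⇑T ⁻¹' A := by
      rintro y ⟨hyY, hyD⟩
      by_cases hex : ∃ n, 1 ≤ n ∧ (⇑T)^[n] y ∈ Y
      · left
        refine ⟨hyY, ?_⟩
        have hmem : R y ∈ {n : ℕ | 1 ≤ n ∧ (⇑T)^[n] y ∈ Y} := by
          rw [hR]; exact Nat.sInf_mem hex
        obtain ⟨hR1, hRY⟩ := hmem
        by_contra hcon
        push_neg at hcon
        obtain ⟨i, hi⟩ := Nat.exists_eq_succ_of_ne_zero (Nat.pos_iff_ne_zero.mp hR1)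
        rw [hi] at hRY hcon
        have h3 := hyD i (by omega)
        rw [Function.iterate_succ_apply] at hRY
        exact h3 hRY
      · right
        intro j
        push_neg at hex
        show (⇑T)^[j] (T y) ∉ Y
        rw [← Function.iterate_succ_apply]
        exact hex (j+1) (by omega)
    have hGle : μ (Y ∩ ⇑T ⁻¹' (D M)) ≤
        ENNReal.ofReal (c1 * (((M+1 : ℕ)) : ℝ) ^ (-(β+1))) := by
      calc μ (Y ∩ ⇑T ⁻¹' (D M)) ≤ μ ({y ∈ Y | M+1 < R y} ∪ ⇑T ⁻¹' A) :=
            measure_mono hGsub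
        _ ≤ μ {y ∈ Y | M+1 < R y} + μ (⇑T ⁻¹' A) := measure_union_le _ _
        _ = μ {y ∈ Y | M+1 < R y} := by rw [hTA, add_zero]
        _ ≤ _ := htail (M+1) (by omega)
    rw [heq]
    exact add_le_add_right hGle _
  -- iterate the step
  have hiter : ∀ M : ℕ, μ (D L) ≤ μ (D (L+M)) +
      ∑ i ∈ range M, ENNReal.ofReal (c1 * (((L+1+i : ℕ)) : ℝ) ^ (-(β+1))) := by
    intro M
    induction M with
    | zero => simp
    | succ M ih =>
      have hidx : L+1+M = (L+M)+1 := by omega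
      calc μ (D L) ≤ μ (D (L+M)) +
          ∑ i ∈ range M, ENNReal.ofReal (c1 * (((L+1+i : ℕ)) : ℝ) ^ (-(β+1))) := ih
        _ ≤ (μ (D (L+M+1)) + ENNReal.ofReal (c1 * ((((L+M)+1 : ℕ)) : ℝ) ^ (-(β+1)))) +
          ∑ i ∈ range M, ENNReal.ofReal (c1 * (((L+1+i : ℕ)) : ℝ) ^ (-(β+1))) :=
            add_le_add_left (hstep (L+M)) _
        _ = μ (D (L+(M+1))) +
          ∑ i ∈ range (M+1), ENNReal.ofReal (c1 * (((L+1+i : ℕ)) : ℝ) ^ (-(β+1))) := by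
            rw [Finset.sum_range_succ, hidx]
            rw [show L+(M+1) = L+M+1 from rfl]
            ring
  -- pass to the limit
  have hInt : (⋂ M, D (L+M)) = A := by
    ext x
    simp only [Set.mem_iInter, hD, Set.mem_setOf_eq, hA]
    constructor
    · intro hx j
      exact hx j j (by omega)
    · intro hx M j _
      exact hx j
  have hlim1 : Tendsto (fun M => μ (D (L+M))) atTop (𝓝 0) := by
    have hanti : Antitone fun M => D (L+M) := by
      intro M M' hMM'
      intro x hx j hj
      exact hx j (le_trans hj (by omega))
    have := tendsto_measure_iInter_atTop (μ := μ)
      (fun M => (hDmeas (L+M)).nullMeasurableSet) hanti ⟨0, measure_ne_top _ _⟩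
    rw [show (⋂ M, D (L+M)) = A from hInt, hA0] at this
    exact this
  have hlim2 : Tendsto (fun M => μ (D (L+M)) +
      ∑ i ∈ range M, ENNReal.ofReal (c1 * (((L+1+i : ℕ)) : ℝ) ^ (-(β+1)))) atTop
      (𝓝 (0 + ∑' i : ℕ, ENNReal.ofReal (c1 * (((L+1+i : ℕ)) : ℝ) ^ (-(β+1))))) :=
    hlim1.add (ENNReal.tendsto_nat_tsum _)
  have hDle : μ (D L) ≤ ∑' i : ℕ, ENNReal.ofReal (c1 * (((L+1+i : ℕ)) : ℝ) ^ (-(β+1))) := by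
    have := ge_of_tendsto' hlim2 hiter
    rwa [zero_add] at this
  -- bound the tail sum
  have hc10 : (0:ℝ) ≤ c1 := le_trans zero_le_one hc1
  have hm1 : 1 ≤ L + 1 := by omega
  have htsum : ∑' i : ℕ, ENNReal.ofReal (c1 * (((L+1+i : ℕ)) : ℝ) ^ (-(β+1))) ≤
      ENNReal.ofReal (c1 * ((1+β)/β) * ((L:ℝ)+1) ^ (-β)) := by
    calc ∑' i : ℕ, ENNReal.ofReal (c1 * (((L+1+i : ℕ)) : ℝ) ^ (-(β+1)))
        = ENNReal.ofReal c1 * ∑' i : ℕ, ENNReal.ofReal ((((L+1+i : ℕ)) : ℝ) ^ (-(β+1))) := by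
          simp_rw [ENNReal.ofReal_mul hc10]; rw [ENNReal.tsum_mul_left]
      _ = ENNReal.ofReal c1 *
          ENNReal.ofReal (∑' i : ℕ, (((L+1+i : ℕ)) : ℝ) ^ (-(β+1))) := by
          rw [ENNReal.ofReal_tsum_of_nonneg
            (fun i => Real.rpow_nonneg (by positivity) _) (tail_summable hβ.le hm1)]
      _ ≤ ENNReal.ofReal c1 * ENNReal.ofReal ((1+β)/β * (((L+1 : ℕ)):ℝ) ^ (-β)) := by
          gcongr
          exact tail_tsum hβ.le hm1
      _ = ENNReal.ofReal (c1 * ((1+β)/β) * ((L:ℝ)+1) ^ (-β)) := by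
          rw [← ENNReal.ofReal_mul hc10]
          congr 1
          push_cast
          ring
  exact le_trans hDle htsum

/-- Lemma 3.2: suppose `Y` is a positive measure union of stable leaves,
the first return time `R` to `Y` has tails `μ(R > n) = O(n^{-(β+1)})`, and the diameters of
`φ(T^n W)` contract geometrically in the number `h_n` of visits to `Y`.  Then the integrated
diameters satisfy `∫ diam(φ(T^n W^s(x))) dμ(x) = O(n^{-β})`. -/
theorem integrated_diameter_bound
    {X : Type*} [mX : MeasurableSpace X]
    (μ : Measure X) [IsProbabilityMeasure μ]
    (T : X ≃ᵐ X) (hT : MeasurePreserving (⇑T) μ μ) (hTerg : Ergodic (⇑T) μ)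
    (Ws : X → Set X)
    (hmem : ∀ x, x ∈ Ws x)
    (hdisj : ∀ x y, Ws x = Ws y ∨ Disjoint (Ws x) (Ws y))
    (hWmeas : ∀ x, MeasurableSet (Ws x))
    (hWinv : ∀ x, ⇑T '' Ws x ⊆ Ws (T x))
    (Y : Set X) (hYmeas : MeasurableSet Y) (hYpos : 0 < μ Y)
    (hYleaves : ∀ x ∈ Y, Ws x ⊆ Y)
    (R : X → ℕ) (hR : ∀ y, R y = sInf {n : ℕ | 1 ≤ n ∧ (⇑T)^[n] y ∈ Y})
    (h : ℕ → X → ℕ) (hh : ∀ n x, h n x = {j : ℕ | j ≤ n ∧ (⇑T)^[j] x ∈ Y}.ncard)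
    (φ : X → ℝ) (hφmeas : Measurable φ)
    (β : ℝ) (hβ : 1 < β)
    (C₁ : ℝ) (htail : ∀ n : ℕ, 1 ≤ n →
      μ {y ∈ Y | n < R y} ≤ ENNReal.ofReal (C₁ * (n : ℝ) ^ (-(β + 1))))
    (C γ : ℝ) (hC : 1 ≤ C) (hγ0 : 0 < γ) (hγ1 : γ < 1)
    (hdiam : ∀ (x : X) (n : ℕ), 1 ≤ n →
      EMetric.diam (φ '' ((⇑T)^[n] '' Ws x)) ≤ ENNReal.ofReal (C * γ ^ h n x)) :
    ∃ C' : ℝ, 0 < C' ∧ ∀ n : ℕ, 1 ≤ n →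
      ∫⁻ x, EMetric.diam (φ '' ((⇑T)^[n] '' Ws x)) ∂μ ≤
        ENNReal.ofReal (C' * (n : ℝ) ^ (-β)) := by
  classical
  have hβ0 : (0:ℝ) < β := lt_trans one_pos hβ
  -- replace C₁ by c1 := max C₁ 1
  set c1 : ℝ := max C₁ 1 with hc1def
  have hc1 : 1 ≤ c1 := le_max_right _ _
  have hc10 : (0:ℝ) ≤ c1 := le_trans zero_le_one hc1
  have htail' : ∀ n : ℕ, 1 ≤ n →
      μ {y ∈ Y | n < R y} ≤ ENNReal.ofReal (c1 * (n : ℝ) ^ (-(β + 1))) := by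
    intro n hn
    refine (htail n hn).trans (ENNReal.ofReal_le_ofReal ?_)
    have : (0:ℝ) ≤ (n:ℝ) ^ (-(β+1)) := Real.rpow_nonneg (Nat.cast_nonneg n) _
    exact mul_le_mul_of_nonneg_right (le_max_left _ _) this
  set c2 : ℝ := c1 * ((1+β)/β) with hc2def
  have hc2 : 0 < c2 := by positivity
  have hDb := Dset_bound μ T hT hTerg Y hYmeas hYpos R hR β hβ c1 hc1 htail'
  -- counting function facts
  have hcount : ∀ n x, h n x =
      ((range (n+1)).filter (fun j => (⇑T)^[j] x ∈ Y)).card := by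
    intro n x
    rw [hh, ← Set.ncard_coe_finset]
    congr 1
    ext j
    simp [Nat.lt_succ_iff]
  have hmeas_h : ∀ n, Measurable (fun x => h n x) := by
    intro n
    have : (fun x => h n x) = fun x =>
        ∑ j ∈ range (n+1), if (⇑T)^[j] x ∈ Y then 1 else 0 := by
      funext x
      rw [hcount, Finset.card_filter]
    rw [this]
    apply Finset.measurable_sum
    intro j _
    exact Measurable.ite (hYmeas.preimage (T.measurable.iterate j))
      measurable_const measurable_const
  have hA_meas : ∀ n k, MeasurableSet {x | h n x ≤ k} := by
    intro n k
    have : {x | h n x ≤ k} = (fun x => h n x) ⁻¹' (Set.Iic k) := rfl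
    rw [this]
    exact (hmeas_h n) measurableSet_Iic
  have h_le : ∀ n x, h n x ≤ n + 1 := by
    intro n x
    rw [hcount]
    calc ((range (n+1)).filter _).card ≤ (range (n+1)).card := Finset.card_filter_le _ _
      _ = n + 1 := Finset.card_range _
  -- key measure estimate by pigeonhole on blocks
  have hkey : ∀ n k : ℕ, 1 ≤ n → k ≤ n →
      μ {x | h n x ≤ k} ≤ ENNReal.ofReal
        (((k:ℝ)+1) * (c2 * (2*((k:ℝ)+1)) ^ β) * (n:ℝ) ^ (-β)) := by
    intro n k hn hkn
    obtain ⟨ℓ, hℓdef⟩ : ∃ ℓ : ℕ, ℓ = (n+1)/(k+1) := ⟨_, rfl⟩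
    have hk1 : 0 < k + 1 := Nat.succ_pos k
    have hℓ1 : 1 ≤ ℓ := by
      rw [hℓdef]
      rw [Nat.le_div_iff_mul_le hk1]
      omega
    have hml : (k+1) * ℓ ≤ n+1 := by
      rw [hℓdef, mul_comm]
      exact Nat.div_mul_le_self (n+1) (k+1)
    -- covering by blocks with no visit
    have hsub : {x | h n x ≤ k} ⊆
        ⋃ i ∈ range (k+1), ((⇑T)^[i*ℓ]) ⁻¹' {z | ∀ j ≤ ℓ-1, (⇑T)^[j] z ∉ Y} := by
      intro x hx
      rw [Set.mem_setOf_eq] at hx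
      by_contra hcon
      simp only [Set.mem_iUnion, Set.mem_preimage, Set.mem_setOf_eq, not_exists] at hcon
      push_neg at hcon
      have hcon' : ∀ i, i ∈ range (k+1) → ∃ j, j ≤ ℓ-1 ∧ (⇑T)^[j + i*ℓ] x ∈ Y := by
        intro i hi
        obtain ⟨j, hj, hjY⟩ := hcon i hi
        refine ⟨j, hj, ?_⟩
        rwa [Function.iterate_add_apply]
      choose! c hc hcY using hcon'
      have hinj : ∀ i ∈ range (k+1), ∀ i' ∈ range (k+1),
          c i + i*ℓ = c i' + i'*ℓ → i = i' := by
        intro i hi i' hi' heq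
        have hci : c i < ℓ := by have := hc i hi; omega
        have hci' : c i' < ℓ := by have := hc i' hi'; omega
        have e1 : (c i + i*ℓ) / ℓ = i := by
          rw [Nat.add_mul_div_right _ _ (by omega : 0 < ℓ), Nat.div_eq_of_lt hci]
          omega
        have e2 : (c i' + i'*ℓ) / ℓ = i' := by
          rw [Nat.add_mul_div_right _ _ (by omega : 0 < ℓ), Nat.div_eq_of_lt hci']
          omega
        rw [← e1, ← e2, heq]
      have hmaps : ∀ i ∈ range (k+1),
          c i + i*ℓ ∈ (range (n+1)).filter (fun j => (⇑T)^[j] x ∈ Y) := by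
        intro i hi
        rw [Finset.mem_filter, Finset.mem_range]
        have hik : i ≤ k := by rw [Finset.mem_range] at hi; omega
        have hmul : i*ℓ ≤ k*ℓ := Nat.mul_le_mul_right ℓ hik
        constructor
        · have := hc i hi
          have hkl : k*ℓ + ℓ ≤ n+1 := by
            calc k*ℓ + ℓ = (k+1)*ℓ := by ring
              _ ≤ n+1 := hml
          omega
        · exact hcY i hi
      have hcard : k+1 ≤ h n x := by
        rw [hcount]
        calc k+1 = (range (k+1)).card := (Finset.card_range _).symm
          _ ≤ _ := Finset.card_le_card_of_injOn (fun i => c i + i*ℓ) hmaps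
              (fun i hi i' hi' => hinj i hi i' hi')
      omega
    -- measure of the union
    have hstep : μ {x | h n x ≤ k} ≤
        (k+1 : ℕ) * ENNReal.ofReal (c2 * (((ℓ-1 : ℕ):ℝ)+1) ^ (-β)) := by
      calc μ {x | h n x ≤ k} ≤
          μ (⋃ i ∈ range (k+1), ((⇑T)^[i*ℓ]) ⁻¹' {z | ∀ j ≤ ℓ-1, (⇑T)^[j] z ∉ Y}) :=
            measure_mono hsub
        _ ≤ ∑ i ∈ range (k+1),
            μ (((⇑T)^[i*ℓ]) ⁻¹' {z | ∀ j ≤ ℓ-1, (⇑T)^[j] z ∉ Y}) :=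
            measure_biUnion_finset_le _ _
        _ = ∑ i ∈ range (k+1), μ {z | ∀ j ≤ ℓ-1, (⇑T)^[j] z ∉ Y} := by
            apply Finset.sum_congr rfl
            intro i _
            have hDmeas : MeasurableSet {z : X | ∀ j ≤ ℓ-1, (⇑T)^[j] z ∉ Y} := by
              have : {z : X | ∀ j ≤ ℓ-1, (⇑T)^[j] z ∉ Y} =
                  ⋂ j ∈ Set.Iic (ℓ-1), ((⇑T)^[j]) ⁻¹' Yᶜ := by
                ext z; simp [Set.mem_iInter]
              rw [this]
              exact MeasurableSet.biInter (Set.to_countable _)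
                (fun j _ => (hYmeas.compl.preimage (T.measurable.iterate j)))
            exact (hT.iterate (i*ℓ)).measure_preimage hDmeas.nullMeasurableSet
        _ ≤ ∑ i ∈ range (k+1),
            ENNReal.ofReal (c2 * (((ℓ-1 : ℕ):ℝ)+1) ^ (-β)) := by
            apply Finset.sum_le_sum
            intro i _
            exact hDb (ℓ-1)
        _ = (k+1 : ℕ) * ENNReal.ofReal (c2 * (((ℓ-1 : ℕ):ℝ)+1) ^ (-β)) := by
            rw [Finset.sum_const, Finset.card_range, nsmul_eq_mul]
    -- numeric estimate
    have hcast : ((ℓ-1 : ℕ):ℝ)+1 = (ℓ:ℝ) := by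
      have : (ℓ-1) + 1 = ℓ := by omega
      rw [← this]; push_cast; ring
    rw [hcast] at hstep
    have hn2 : (n:ℝ) ≤ 2*((k:ℝ)+1)*(ℓ:ℝ) := by
      have hmod : (k+1)*ℓ + (n+1)%(k+1) = n+1 := by
        rw [hℓdef]; exact Nat.div_add_mod (n+1) (k+1)
      have hmodlt : (n+1) % (k+1) < k+1 := Nat.mod_lt _ hk1
      have hk1l : k+1 ≤ (k+1)*ℓ := Nat.le_mul_of_pos_right _ (by omega)
      have : n ≤ 2*((k+1)*ℓ) := by omega
      calc (n:ℝ) ≤ (2*((k+1)*ℓ) : ℕ) := by exact_mod_cast this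
        _ = 2*((k:ℝ)+1)*(ℓ:ℝ) := by push_cast; ring
    have hℓpos : (0:ℝ) < (ℓ:ℝ) := by exact_mod_cast hℓ1
    have hnpos : (0:ℝ) < (n:ℝ) := by exact_mod_cast hn
    have hrpow : (ℓ:ℝ) ^ (-β) ≤ (2*((k:ℝ)+1)) ^ β * (n:ℝ) ^ (-β) := by
      have h2k : (0:ℝ) < 2*((k:ℝ)+1) := by positivity
      have hinv : (ℓ:ℝ)⁻¹ ≤ 2*((k:ℝ)+1)/(n:ℝ) := by
        rw [inv_eq_one_div, div_le_div_iff₀ hℓpos hnpos]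
        nlinarith
      calc (ℓ:ℝ) ^ (-β) = ((ℓ:ℝ)⁻¹) ^ β := by
            rw [Real.inv_rpow hℓpos.le, Real.rpow_neg hℓpos.le]
        _ ≤ (2*((k:ℝ)+1)/(n:ℝ)) ^ β := Real.rpow_le_rpow (by positivity) hinv hβ0.le
        _ = (2*((k:ℝ)+1)) ^ β * (n:ℝ) ^ (-β) := by
            rw [Real.div_rpow h2k.le hnpos.le, Real.rpow_neg hnpos.le, div_eq_mul_inv]
    refine hstep.trans ?_
    have hfin : ((k+1:ℕ) : ℝ≥0∞) = ENNReal.ofReal ((k:ℝ)+1) := by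
      rw [← ENNReal.ofReal_natCast]; congr 1; push_cast; ring
    rw [hfin, ← ENNReal.ofReal_mul (by positivity)]
    apply ENNReal.ofReal_le_ofReal
    have hc2' : (0:ℝ) ≤ c2 := hc2.le
    calc ((k:ℝ)+1) * (c2 * (ℓ:ℝ) ^ (-β)) ≤
        ((k:ℝ)+1) * (c2 * ((2*((k:ℝ)+1)) ^ β * (n:ℝ) ^ (-β))) := by
          apply mul_le_mul_of_nonneg_left _ (by positivity)
          exact mul_le_mul_of_nonneg_left hrpow hc2'
      _ = ((k:ℝ)+1) * (c2 * (2*((k:ℝ)+1)) ^ β) * (n:ℝ) ^ (-β) := by ring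
  -- geometric tail constant
  obtain ⟨T1, hT1pos, hsumm1, hT1⟩ := pow_geom_tsum hγ0 hγ1 ⌈β⌉₊
  have hγK : ∀ n : ℕ, 1 ≤ n → γ ^ (n+1) ≤ T1 * (n:ℝ) ^ (-β) := by
    intro n hn
    have hn1 : (1:ℝ) ≤ (n:ℝ) := by exact_mod_cast hn
    have hnpos : (0:ℝ) < n := by linarith
    have hterm : ((n:ℝ)+1) ^ ⌈β⌉₊ * γ ^ n ≤ T1 := by
      have hmem : n ∈ range (n+1) := by simp
      have hnn : ∀ k ∈ range (n+1), (0:ℝ) ≤ ((k:ℝ)+1) ^ ⌈β⌉₊ * γ ^ k :=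
        fun k _ => by positivity
      exact le_trans (Finset.single_le_sum hnn hmem) (hT1 (n+1))
    have hnp : (n:ℝ) ^ (⌈β⌉₊:ℕ) * γ ^ n ≤ T1 := by
      refine le_trans ?_ hterm
      apply mul_le_mul_of_nonneg_right _ (pow_nonneg hγ0.le n)
      exact pow_le_pow_left₀ (by linarith) (by linarith) _
    have hstep1 : γ ^ n ≤ T1 * ((n:ℝ) ^ (⌈β⌉₊:ℕ))⁻¹ := by
      rw [← div_eq_mul_inv, le_div_iff₀ (pow_pos hnpos _)]
      linarith [hnp]
    have hstep2 : ((n:ℝ) ^ (⌈β⌉₊:ℕ))⁻¹ = (n:ℝ) ^ (-((⌈β⌉₊:ℕ):ℝ)) := by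
      rw [Real.rpow_neg hnpos.le, Real.rpow_natCast]
    have hstep3 : (n:ℝ) ^ (-((⌈β⌉₊:ℕ):ℝ)) ≤ (n:ℝ) ^ (-β) :=
      Real.rpow_le_rpow_of_exponent_le hn1 (neg_le_neg (Nat.le_ceil β))
    calc γ ^ (n+1) ≤ γ ^ n := pow_le_pow_of_le_one hγ0.le hγ1.le (by omega)
      _ ≤ T1 * ((n:ℝ) ^ (⌈β⌉₊:ℕ))⁻¹ := hstep1
      _ = T1 * (n:ℝ) ^ (-((⌈β⌉₊:ℕ):ℝ)) := by rw [hstep2]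
      _ ≤ T1 * (n:ℝ) ^ (-β) := mul_le_mul_of_nonneg_left hstep3 hT1pos.le
  -- series constant
  obtain ⟨T2, hT2pos, hsumm2, hT2⟩ := pow_geom_tsum hγ0 hγ1 ⌈β+1⌉₊
  have hS : (0:ℝ) < 2 ^ β * T2 := mul_pos (Real.rpow_pos_of_pos two_pos β) hT2pos
  set S : ℝ := 2 ^ β * T2 with hSdef
  have hu : ∀ N, ∑ k ∈ range N,
      (γ^k * (((k:ℝ)+1) * (2*((k:ℝ)+1)) ^ β)) ≤ S := by
    intro N
    have hterm : ∀ k : ℕ, γ^k * (((k:ℝ)+1) * (2*((k:ℝ)+1)) ^ β) ≤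
        2 ^ β * (((k:ℝ)+1) ^ ⌈β+1⌉₊ * γ ^ k) := by
      intro k
      have hk0 : (0:ℝ) ≤ (k:ℝ) := Nat.cast_nonneg k
      have hk1 : (1:ℝ) ≤ (k:ℝ)+1 := by linarith
      have hkpos : (0:ℝ) < (k:ℝ)+1 := by linarith
      have e1 : (2*((k:ℝ)+1)) ^ β = 2 ^ β * ((k:ℝ)+1) ^ β :=
        Real.mul_rpow (by norm_num) (by linarith)
      have e2 : ((k:ℝ)+1) * ((k:ℝ)+1) ^ β = ((k:ℝ)+1) ^ (β+1) := by
        rw [Real.rpow_add hkpos, Real.rpow_one]; ring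
      have e3 : ((k:ℝ)+1) ^ (β+1) ≤ ((k:ℝ)+1) ^ ((⌈β+1⌉₊:ℕ):ℝ) :=
        Real.rpow_le_rpow_of_exponent_le hk1 (Nat.le_ceil _)
      have e4 : ((k:ℝ)+1) ^ ((⌈β+1⌉₊:ℕ):ℝ) = ((k:ℝ)+1) ^ (⌈β+1⌉₊:ℕ) :=
        Real.rpow_natCast _ _
      calc γ^k * (((k:ℝ)+1) * (2*((k:ℝ)+1)) ^ β)
          = 2 ^ β * (((k:ℝ)+1) * ((k:ℝ)+1) ^ β * γ ^ k) := by rw [e1]; ring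
        _ = 2 ^ β * (((k:ℝ)+1) ^ (β+1) * γ ^ k) := by rw [e2]
        _ ≤ 2 ^ β * (((k:ℝ)+1) ^ (⌈β+1⌉₊:ℕ) * γ ^ k) := by
            apply mul_le_mul_of_nonneg_left _ (Real.rpow_nonneg (by norm_num) β)
            apply mul_le_mul_of_nonneg_right _ (pow_nonneg hγ0.le k)
            rw [← e4]; exact e3
    calc ∑ k ∈ range N, (γ^k * (((k:ℝ)+1) * (2*((k:ℝ)+1)) ^ β))
        ≤ ∑ k ∈ range N, 2 ^ β * (((k:ℝ)+1) ^ ⌈β+1⌉₊ * γ ^ k) :=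
          Finset.sum_le_sum fun k _ => hterm k
      _ = 2 ^ β * ∑ k ∈ range N, (((k:ℝ)+1) ^ ⌈β+1⌉₊ * γ ^ k) := by
          rw [Finset.mul_sum]
      _ ≤ 2 ^ β * T2 := by
          apply mul_le_mul_of_nonneg_left (hT2 N) (Real.rpow_nonneg (by norm_num) β)
  -- final constant
  have hC0 : (0:ℝ) ≤ C := by linarith
  have hCpos : (0:ℝ) < C := by linarith
  have hC'pos : (0:ℝ) < C * (c2 * S + T1) :=
    mul_pos hCpos (add_pos (mul_pos hc2 hS) hT1pos)
  refine ⟨C * (c2 * S + T1), hC'pos, ?_⟩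
  intro n hn
  have hn1 : (1:ℝ) ≤ (n:ℝ) := by exact_mod_cast hn
  have hnpos : (0:ℝ) < (n:ℝ) := by linarith
  have hnb0 : (0:ℝ) ≤ (n:ℝ) ^ (-β) := Real.rpow_nonneg hnpos.le _
  -- step 1: pointwise diameter bound
  have h1 : ∫⁻ x, EMetric.diam (φ '' ((⇑T)^[n] '' Ws x)) ∂μ ≤
      ∫⁻ x, ENNReal.ofReal (C * γ ^ h n x) ∂μ :=
    lintegral_mono fun x => hdiam x n hn
  -- step 2: pointwise indicator bound
  have h2 : ∀ x, ENNReal.ofReal (C * γ ^ h n x) ≤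
      ∑ k ∈ range (n+2),
        Set.indicator {z | h n z ≤ k} (fun _ => ENNReal.ofReal (C * γ^k)) x := by
    intro x
    have hmemx : h n x ∈ range (n+2) := by
      rw [Finset.mem_range]; have := h_le n x; omega
    have hsingle := Finset.single_le_sum
      (f := fun k => Set.indicator {z | h n z ≤ k}
        (fun _ => ENNReal.ofReal (C * γ^(k:ℕ))) x)
      (fun k _ => zero_le) hmemx
    refine le_trans ?_ hsingle
    show ENNReal.ofReal (C * γ ^ h n x) ≤
      Set.indicator {z | h n z ≤ h n x} (fun _ => ENNReal.ofReal (C * γ ^ h n x)) x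
    have hxin : x ∈ {z | h n z ≤ h n x} := le_refl (h n x)
    rw [Set.indicator_of_mem hxin]
  -- step 3: integral of the indicator sum
  have h3 : ∫⁻ x, (∑ k ∈ range (n+2),
      Set.indicator {z | h n z ≤ k} (fun _ => ENNReal.ofReal (C * γ^k)) x) ∂μ
      = ∑ k ∈ range (n+2), ENNReal.ofReal (C * γ^k) * μ {z | h n z ≤ k} := by
    rw [lintegral_finset_sum]
    · exact Finset.sum_congr rfl fun k _ => lintegral_indicator_const (hA_meas n k) _
    · exact fun k _ => measurable_const.indicator (hA_meas n k)
  -- main sum bound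
  have hsum_main : ∑ k ∈ range (n+1), ENNReal.ofReal (C * γ^k) * μ {z | h n z ≤ k}
      ≤ ENNReal.ofReal ((C * c2 * (n:ℝ) ^ (-β)) * S) := by
    calc ∑ k ∈ range (n+1), ENNReal.ofReal (C * γ^k) * μ {z | h n z ≤ k}
        ≤ ∑ k ∈ range (n+1), ENNReal.ofReal ((C * c2 * (n:ℝ) ^ (-β)) *
            (γ^k * (((k:ℝ)+1) * (2*((k:ℝ)+1)) ^ β))) := by
          apply Finset.sum_le_sum
          intro k hk
          have hkn : k ≤ n := by rw [Finset.mem_range] at hk; omega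
          calc ENNReal.ofReal (C * γ^k) * μ {z | h n z ≤ k}
              ≤ ENNReal.ofReal (C * γ^k) * ENNReal.ofReal
                (((k:ℝ)+1) * (c2 * (2*((k:ℝ)+1)) ^ β) * (n:ℝ) ^ (-β)) :=
                mul_le_mul_right (hkey n k hn hkn) _
            _ = ENNReal.ofReal ((C * c2 * (n:ℝ) ^ (-β)) *
                (γ^k * (((k:ℝ)+1) * (2*((k:ℝ)+1)) ^ β))) := by
                rw [← ENNReal.ofReal_mul (by positivity)]
                congr 1
                ring
      _ = ENNReal.ofReal ((C * c2 * (n:ℝ) ^ (-β)) * ∑ k ∈ range (n+1),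
            (γ^k * (((k:ℝ)+1) * (2*((k:ℝ)+1)) ^ β))) := by
          rw [Finset.mul_sum, ENNReal.ofReal_sum_of_nonneg]
          intro k _
          have hc2' := hc2.le
          positivity
      _ ≤ ENNReal.ofReal ((C * c2 * (n:ℝ) ^ (-β)) * S) := by
          apply ENNReal.ofReal_le_ofReal
          apply mul_le_mul_of_nonneg_left (hu (n+1))
          have hc2' := hc2.le
          positivity
  -- last term bound
  have hlast : ENNReal.ofReal (C * γ^(n+1)) * μ {z | h n z ≤ n+1}
      ≤ ENNReal.ofReal (C * T1 * (n:ℝ) ^ (-β)) := by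
    calc ENNReal.ofReal (C * γ^(n+1)) * μ {z | h n z ≤ n+1}
        ≤ ENNReal.ofReal (C * γ^(n+1)) * 1 := mul_le_mul_right prob_le_one _
      _ = ENNReal.ofReal (C * γ^(n+1)) := mul_one _
      _ ≤ ENNReal.ofReal (C * (T1 * (n:ℝ) ^ (-β))) :=
          ENNReal.ofReal_le_ofReal (mul_le_mul_of_nonneg_left (hγK n hn) hC0)
      _ = ENNReal.ofReal (C * T1 * (n:ℝ) ^ (-β)) := by rw [mul_assoc]
  -- put everything together
  calc ∫⁻ x, EMetric.diam (φ '' ((⇑T)^[n] '' Ws x)) ∂μ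
      ≤ ∫⁻ x, ENNReal.ofReal (C * γ ^ h n x) ∂μ := h1
    _ ≤ ∫⁻ x, (∑ k ∈ range (n+2),
        Set.indicator {z | h n z ≤ k} (fun _ => ENNReal.ofReal (C * γ^k)) x) ∂μ :=
        lintegral_mono h2
    _ = ∑ k ∈ range (n+2), ENNReal.ofReal (C * γ^k) * μ {z | h n z ≤ k} := h3
    _ = (∑ k ∈ range (n+1), ENNReal.ofReal (C * γ^k) * μ {z | h n z ≤ k}) +
        ENNReal.ofReal (C * γ^(n+1)) * μ {z | h n z ≤ n+1} := by
        rw [Finset.sum_range_succ]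
    _ ≤ ENNReal.ofReal ((C * c2 * (n:ℝ) ^ (-β)) * S) +
        ENNReal.ofReal (C * T1 * (n:ℝ) ^ (-β)) := add_le_add hsum_main hlast
    _ = ENNReal.ofReal (C * (c2 * S + T1) * (n:ℝ) ^ (-β)) := by
        rw [← ENNReal.ofReal_add]
        · congr 1; ring
        · have hc2' := hc2.le
          have hS' := hS.le
          positivity
        · have hT1' := hT1pos.le
          positivity
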